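/- Assume r and θ are nonconstant and the parametrization is proper. If the function θ(t) is bounded on Ω, then the curve has at most finitely many self-intersection points. -/

import Mathlib

open Polynomial

/-- Pigeonhole: an infinite set mapped into a finite set has an infinite fiber. -/
lemma pigeon_fiber {α β : Type*} {S : Set α} (hS : S.Infinite) {f : α → β} {V : Set β}
    (hV : V.Finite) (hf : ∀ p ∈ S, f p ∈ V) :
    ∃ v, ({p ∈ S | f p = v}).Infinite := by
  by_contra h
  push_neg at h
  have : S ⊆ ⋃ v ∈ V, {p ∈ S | f p = v} := by
    intro p hp
    exact Set.mem_biUnion (hf p hp) ⟨hp, rfl⟩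
  exact hS ((hV.biUnion (fun v _ => h v)).subset this)

lemma coeff_sum_C_X {n : ℕ} (f : Fin (n+1) → ℝ) (j : Fin (n+1)) :
    (∑ i : Fin (n+1), Polynomial.C (f i) * Polynomial.X ^ (i:ℕ)).coeff (j:ℕ) = f j := by
  rw [Polynomial.finset_sum_coeff]
  rw [Finset.sum_eq_single j]
  · simp [Polynomial.coeff_C_mul, Polynomial.coeff_X_pow]
  · intro i _ hij
    simp only [Polynomial.coeff_C_mul, Polynomial.coeff_X_pow]
    rw [if_neg (by simpa [Fin.val_eq_val] using hij.symm), mul_zero]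
  · simp

/-- Generic linear algebra: more coefficients than degree constraints gives a
nontrivial vanishing combination. -/
lemma exists_nonzero_combo {n m : ℕ} (P : Fin n → Fin n → Polynomial ℝ)
    (hdeg : ∀ j k, (P j k).natDegree < m) (hnm : m < n * n) :
    ∃ c : Fin n → Fin n → ℝ, c ≠ 0 ∧ ∑ j, ∑ k, c j k • P j k = 0 := by
  classical
  set Smap : (Fin n → Fin n → ℝ) →ₗ[ℝ] Polynomial ℝ :=
    { toFun := fun c => ∑ j, ∑ k, c j k • P j k
      map_add' := by
        intro x y
        simp only [Pi.add_apply, add_smul, Finset.sum_add_distrib]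
      map_smul' := by
        intro a x
        simp only [Pi.smul_apply, smul_eq_mul, RingHom.id_apply, Finset.smul_sum, smul_smul] }
    with hSmap
  have hSapp : ∀ c : Fin n → Fin n → ℝ, Smap c = ∑ j, ∑ k, c j k • P j k := fun _ => rfl
  set L : (Fin n → Fin n → ℝ) →ₗ[ℝ] (Fin m → ℝ) :=
    (LinearMap.pi (fun i : Fin m => Polynomial.lcoeff ℝ (i:ℕ))).comp Smap with hL
  have hnotinj : ¬ Function.Injective L := by
    intro hinj
    have h1 := LinearMap.finrank_le_finrank_of_injective hinj
    rw [Module.finrank_pi] at h1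
    have hdom : Module.finrank ℝ (Fin n → Fin n → ℝ) = n * n := by
      rw [Module.finrank_pi_fintype]
      simp [Module.finrank_pi]
    rw [hdom] at h1
    simp only [Fintype.card_fin] at h1
    omega
  rw [Function.not_injective_iff] at hnotinj
  obtain ⟨x, y, hxy, hne⟩ := hnotinj
  refine ⟨x - y, sub_ne_zero.mpr hne, ?_⟩
  have hLz : L (x - y) = 0 := by rw [map_sub, hxy, sub_self]
  have hLz' : ∀ i : Fin m, (Smap (x - y)).coeff (i:ℕ) = 0 := by
    intro i
    have := congrFun hLz i
    simpa [hL] using this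
  rcases Nat.eq_zero_or_pos n with hn0 | hn0
  · subst hn0; simp at hnm
  rcases Nat.eq_zero_or_pos m with hm0 | hm0
  · exact absurd (hdeg ⟨0, hn0⟩ ⟨0, hn0⟩) (by omega)
  have hdegle : (Smap (x - y)).natDegree ≤ m - 1 := by
    rw [hSapp]
    apply Polynomial.natDegree_sum_le_of_forall_le
    intro j _
    apply Polynomial.natDegree_sum_le_of_forall_le
    intro k _
    exact le_trans (Polynomial.natDegree_smul_le _ _) (Nat.le_sub_one_of_lt (hdeg j k))
  have hz : Smap (x - y) = 0 := by
    apply Polynomial.ext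
    intro nn
    rw [Polynomial.coeff_zero]
    by_cases hnn : nn < m
    · exact hLz' ⟨nn, hnn⟩
    · exact Polynomial.coeff_eq_zero_of_natDegree_lt (by omega)
  rw [hSapp] at hz
  exact hz

/-- Algebraic dependence of two rational functions, cleared-denominator form. -/
lemma exists_dep (A B C D : Polynomial ℝ) :
    ∃ (N : ℕ) (c : Fin (N+1) → Fin (N+1) → ℝ), c ≠ 0 ∧
      ∑ j : Fin (N+1), ∑ k : Fin (N+1),
        c j k • (C^(j:ℕ) * D^(N-(j:ℕ)) * A^(k:ℕ) * B^(N-(k:ℕ))) = 0 := by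
  set Kc := max C.natDegree D.natDegree with hKc
  set Ka := max A.natDegree B.natDegree with hKa
  set K := Kc + Ka with hK
  set N := K + 1 with hN
  have hdeg : ∀ j k : Fin (N+1),
      (C^(j:ℕ) * D^(N-(j:ℕ)) * A^(k:ℕ) * B^(N-(k:ℕ))).natDegree < N*K+1 := by
    intro j k
    have h1 : (C^(j:ℕ)).natDegree ≤ (j:ℕ) * Kc :=
      le_trans Polynomial.natDegree_pow_le (Nat.mul_le_mul_left _ (le_max_left _ _))
    have h2 : (D^(N-(j:ℕ))).natDegree ≤ (N-(j:ℕ)) * Kc :=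
      le_trans Polynomial.natDegree_pow_le (Nat.mul_le_mul_left _ (le_max_right _ _))
    have h3 : (A^(k:ℕ)).natDegree ≤ (k:ℕ) * Ka :=
      le_trans Polynomial.natDegree_pow_le (Nat.mul_le_mul_left _ (le_max_left _ _))
    have h4 : (B^(N-(k:ℕ))).natDegree ≤ (N-(k:ℕ)) * Ka :=
      le_trans Polynomial.natDegree_pow_le (Nat.mul_le_mul_left _ (le_max_right _ _))
    have hj : (j:ℕ) ≤ N := Fin.is_le j
    have hk : (k:ℕ) ≤ N := Fin.is_le k
    have hle : (C^(j:ℕ) * D^(N-(j:ℕ)) * A^(k:ℕ) * B^(N-(k:ℕ))).natDegree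
        ≤ (((j:ℕ) * Kc + (N-(j:ℕ)) * Kc) + (k:ℕ) * Ka) + (N-(k:ℕ)) * Ka := by
      calc (C^(j:ℕ) * D^(N-(j:ℕ)) * A^(k:ℕ) * B^(N-(k:ℕ))).natDegree
          ≤ ((C^(j:ℕ) * D^(N-(j:ℕ)) * A^(k:ℕ)).natDegree + (B^(N-(k:ℕ))).natDegree) :=
            Polynomial.natDegree_mul_le
        _ ≤ ((C^(j:ℕ) * D^(N-(j:ℕ))).natDegree + (A^(k:ℕ)).natDegree) + (B^(N-(k:ℕ))).natDegree :=
            Nat.add_le_add_right Polynomial.natDegree_mul_le _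
        _ ≤ (((C^(j:ℕ)).natDegree + (D^(N-(j:ℕ))).natDegree) + (A^(k:ℕ)).natDegree)
              + (B^(N-(k:ℕ))).natDegree :=
            Nat.add_le_add_right (Nat.add_le_add_right Polynomial.natDegree_mul_le _) _
        _ ≤ (((j:ℕ) * Kc + (N-(j:ℕ)) * Kc) + (k:ℕ) * Ka) + (N-(k:ℕ)) * Ka :=
            Nat.add_le_add (Nat.add_le_add (Nat.add_le_add h1 h2) h3) h4
    have heq : (((j:ℕ) * Kc + (N-(j:ℕ)) * Kc) + (k:ℕ) * Ka) + (N-(k:ℕ)) * Ka = N * K := by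
      have e1 : (j:ℕ) * Kc + (N-(j:ℕ)) * Kc = N * Kc := by
        rw [← Nat.add_mul, Nat.add_sub_cancel' hj]
      have e2 : (k:ℕ) * Ka + (N-(k:ℕ)) * Ka = N * Ka := by
        rw [← Nat.add_mul, Nat.add_sub_cancel' hk]
      calc ((j:ℕ) * Kc + (N-(j:ℕ)) * Kc) + (k:ℕ) * Ka + (N-(k:ℕ)) * Ka
          = ((j:ℕ) * Kc + (N-(j:ℕ)) * Kc) + ((k:ℕ) * Ka + (N-(k:ℕ)) * Ka) := by ring
        _ = N * Kc + N * Ka := by rw [e1, e2]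
        _ = N * K := by rw [hK, Nat.mul_add]
    omega
  have hnm : N*K+1 < (N+1) * (N+1) := by
    have : N = K + 1 := hN
    nlinarith
  obtain ⟨c, hc, hcs⟩ := exists_nonzero_combo _ hdeg hnm
  exact ⟨N, c, hc, hcs⟩

/-- The domain Ω = {t : B(t) ≠ 0 and D(t) ≠ 0}. -/
def polarDomain (B D : Polynomial ℝ) : Set ℝ :=
  {t : ℝ | B.eval t ≠ 0 ∧ D.eval t ≠ 0}

/-- The rational function defined by a pair of polynomials, e.g. r(t) = A(t)/B(t). -/
noncomputable def ratFun (A B : Polynomial ℝ) (t : ℝ) : ℝ :=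
  A.eval t / B.eval t

/-- The curve in Cartesian coordinates: P(t) = (r(t)·cos(θ(t)), r(t)·sin(θ(t))). -/
noncomputable def polarCurve (A B C D : Polynomial ℝ) (t : ℝ) : ℝ × ℝ :=
  (ratFun A B t * Real.cos (ratFun C D t), ratFun A B t * Real.sin (ratFun C D t))

/-- Properness: outside a finite set F, (r(t), θ(t)) = (r(s), θ(s)) implies t = s. -/
def IsProperPolar (A B C D : Polynomial ℝ) : Prop :=
  ∃ F : Set ℝ, F.Finite ∧ ∀ t s : ℝ, t ∈ polarDomain B D → s ∈ polarDomain B D →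
    t ∉ F → s ∉ F → ratFun A B t = ratFun A B s → ratFun C D t = ratFun C D s → t = s

/-- The set of self-intersection points of the curve. -/
noncomputable def selfIntersections (A B C D : Polynomial ℝ) : Set (ℝ × ℝ) :=
  {p : ℝ × ℝ | ∃ t s : ℝ, t ∈ polarDomain B D ∧ s ∈ polarDomain B D ∧ t ≠ s ∧
    polarCurve A B C D t = p ∧ polarCurve A B C D s = p}

/- STATEMENT 7: if θ(t) is bounded on Ω, then the curve has at most finitely many
self-intersection points. -/

/-- Same cartesian point with nonzero radius: the angles differ by a multiple of π
with matching sign of radius. -/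
lemma angle_rel {rt rs a b : ℝ} (hrt : rt ≠ 0)
    (h1 : rt * Real.cos a = rs * Real.cos b) (h2 : rt * Real.sin a = rs * Real.sin b) :
    ∃ m : ℤ, a - b = m * Real.pi ∧ ((Even m ∧ rt = rs) ∨ (Odd m ∧ rt = -rs)) := by
  have pa := Real.sin_sq_add_cos_sq a
  have pb := Real.sin_sq_add_cos_sq b
  have e1 : (rt * Real.cos a)^2 = (rs * Real.cos b)^2 := by rw [h1]
  have e2 : (rt * Real.sin a)^2 = (rs * Real.sin b)^2 := by rw [h2]
  have hsq : (rt - rs) * (rt + rs) = 0 := by linear_combination e1 + e2 - rt^2 * pa + rs^2 * pb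
  rcases mul_eq_zero.mp hsq with h | h
  · -- rt = rs
    have hrs : rt = rs := by linarith
    subst hrs
    have hcos : Real.cos a = Real.cos b := mul_left_cancel₀ hrt h1
    have hsin : Real.sin a = Real.sin b := mul_left_cancel₀ hrt h2
    have hc1 : Real.cos (a - b) = 1 := by
      rw [Real.cos_sub, hcos, hsin]; linear_combination pb
    obtain ⟨n, hn⟩ := (Real.cos_eq_one_iff _).mp hc1
    refine ⟨2*n, ?_, Or.inl ⟨even_two_mul n, rfl⟩⟩
    push_cast
    linarith
  · -- rt = -rs
    have hrs : rt = -rs := by linarith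
    subst hrs
    have hrs' : rs ≠ 0 := fun h0 => hrt (by rw [h0, neg_zero])
    have hcos : Real.cos a = -Real.cos b := by
      apply mul_left_cancel₀ hrs'
      linear_combination -h1
    have hsin : Real.sin a = -Real.sin b := by
      apply mul_left_cancel₀ hrs'
      linear_combination -h2
    have hc1 : Real.cos (a - b + Real.pi) = 1 := by
      rw [Real.cos_add, Real.cos_pi, Real.sin_pi, Real.cos_sub, hcos, hsin]
      linear_combination pb
    obtain ⟨n, hn⟩ := (Real.cos_eq_one_iff _).mp hc1
    refine ⟨2*n - 1, ?_, Or.inr ⟨⟨n - 1, by ring⟩, rfl⟩⟩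
    push_cast
    linarith

set_option maxHeartbeats 1000000 in
lemma core_contradiction (A B C D : Polynomial ℝ) (hB : B ≠ 0) (hD : D ≠ 0)
    (hAB : IsCoprime A B) (hr : ¬ (A.natDegree = 0 ∧ B.natDegree = 0))
    (m : ℤ) (hm : m ≠ 0) (ε : ℝ) (hε : ε = 1 ∨ ε = -1)
    (T : Set ℝ) (hT : T.Infinite)
    (hTsub : ∀ t ∈ T, B.eval t ≠ 0 ∧ D.eval t ≠ 0)
    (σ : ℝ → ℝ)
    (hσ : ∀ t ∈ T, (B.eval (σ t) ≠ 0 ∧ D.eval (σ t) ≠ 0) ∧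
      ratFun C D t = ratFun C D (σ t) + m * Real.pi ∧
      ratFun A B t = ε * ratFun A B (σ t)) : False := by
  classical
  obtain ⟨N, c, hc, hS⟩ := exists_dep A B C D
  have hε2 : ε * ε = 1 := by rcases hε with h | h <;> rw [h] <;> norm_num
  set ψ : ℝ → ℝ → ℝ :=
    fun x y => ∑ j : Fin (N+1), ∑ k : Fin (N+1), c j k * x^(j:ℕ) * y^(k:ℕ) with hψ
  set Qp : ℝ → ℝ → Polynomial ℝ := fun γ η =>
    ∑ j : Fin (N+1), ∑ k : Fin (N+1), (c j k * η^(k:ℕ)) •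
      ((C - Polynomial.C γ * D)^(j:ℕ) * D^(N-(j:ℕ)) * A^(k:ℕ) * B^(N-(k:ℕ))) with hQp
  -- the bridge between Qp and ψ
  have bridge : ∀ γ η t, B.eval t ≠ 0 → D.eval t ≠ 0 →
      (Qp γ η).eval t = (B.eval t)^N * (D.eval t)^N *
        ψ (ratFun C D t - γ) (η * ratFun A B t) := by
    intro γ η t hBt hDt
    rw [hQp, hψ]
    simp only [Polynomial.eval_finset_sum, Polynomial.eval_smul, smul_eq_mul,
      Polynomial.eval_mul, Polynomial.eval_pow, Polynomial.eval_sub, Polynomial.eval_C,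
      Finset.mul_sum]
    apply Finset.sum_congr rfl
    intro j _
    apply Finset.sum_congr rfl
    intro k _
    have hj : (j:ℕ) ≤ N := Fin.is_le j
    have hk : (k:ℕ) ≤ N := Fin.is_le k
    rw [← pow_sub_mul_pow (B.eval t) hk, ← pow_sub_mul_pow (D.eval t) hj]
    unfold ratFun
    rw [div_sub' hDt, div_pow, mul_pow, div_pow]
    field_simp
  -- the induction
  have hQ : ∀ k : ℕ, Qp ((k:ℝ) * m * Real.pi) (ε^k) = 0 := by
    intro k
    induction k with
    | zero =>
      have : Qp 0 1 = 0 := by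
        rw [hQp]
        simpa using hS
      simpa using this
    | succ k ih =>
      apply Polynomial.eq_zero_of_infinite_isRoot
      apply hT.mono
      intro t ht
      obtain ⟨hBt, hDt⟩ := hTsub t ht
      obtain ⟨⟨hBσ, hDσ⟩, hθrel, hrrel⟩ := hσ t ht
      simp only [Set.mem_setOf_eq, Polynomial.IsRoot]
      rw [bridge _ _ t hBt hDt]
      have e1 : ratFun C D t - ((k+1:ℕ):ℝ) * m * Real.pi
          = ratFun C D (σ t) - (k:ℝ) * m * Real.pi := by
        rw [hθrel]; push_cast; ring
      have e2 : ε^(k+1) * ratFun A B t = ε^k * ratFun A B (σ t) := by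
        rw [hrrel, pow_succ]
        calc ε^k * ε * (ε * ratFun A B (σ t)) = ε^k * ((ε*ε) * ratFun A B (σ t)) := by ring
          _ = ε^k * ratFun A B (σ t) := by rw [hε2, one_mul]
      rw [e1, e2]
      have := bridge ((k:ℝ) * m * Real.pi) (ε^k) (σ t) hBσ hDσ
      rw [ih] at this
      simp only [Polynomial.eval_zero] at this
      have hψzero : ψ (ratFun C D (σ t) - (k:ℝ) * m * Real.pi) (ε^k * ratFun A B (σ t)) = 0 := by
        have hne : (B.eval (σ t))^N * (D.eval (σ t))^N ≠ 0 :=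
          mul_ne_zero (pow_ne_zero _ hBσ) (pow_ne_zero _ hDσ)
        rcases mul_eq_zero.mp this.symm with h | h
        · exact absurd h hne
        · exact h
      rw [hψzero, mul_zero]
  -- pick a nonzero coefficient
  rw [Function.ne_iff] at hc
  obtain ⟨j₀, hcj⟩ := hc
  rw [Function.ne_iff] at hcj
  obtain ⟨k₀, hck⟩ := hcj
  simp only [Pi.zero_apply] at hck
  set hp : Polynomial ℝ := ∑ k : Fin (N+1), Polynomial.C (c j₀ k) * Polynomial.X^(k:ℕ)
    with hhp
  have hpne : hp ≠ 0 := by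
    intro h0
    have := coeff_sum_C_X (fun k => c j₀ k) k₀
    rw [← hhp, h0, Polynomial.coeff_zero] at this
    exact hck this.symm
  have hpeval : ∀ y : ℝ, hp.eval y = ∑ k : Fin (N+1), c j₀ k * y^(k:ℕ) := by
    intro y
    rw [hhp]
    simp [Polynomial.eval_finset_sum]
  -- each point of the domain has r-value a root of q
  have key : ∀ t₀ : ℝ, B.eval t₀ ≠ 0 → D.eval t₀ ≠ 0 →
      hp.eval (ratFun A B t₀) = 0 ∨ hp.eval (-(ratFun A B t₀)) = 0 := by
    intro t₀ hBt hDt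
    have hψ0 : ∀ k : ℕ, ψ (ratFun C D t₀ - (k:ℝ) * m * Real.pi) (ε^k * ratFun A B t₀) = 0 := by
      intro k
      have := bridge ((k:ℝ) * m * Real.pi) (ε^k) t₀ hBt hDt
      rw [hQ k] at this
      simp only [Polynomial.eval_zero] at this
      have hne : (B.eval t₀)^N * (D.eval t₀)^N ≠ 0 :=
        mul_ne_zero (pow_ne_zero _ hBt) (pow_ne_zero _ hDt)
      rcases mul_eq_zero.mp this.symm with h | h
      · exact absurd h hne
      · exact h
    set P1 : Polynomial ℝ := ∑ j : Fin (N+1),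
      Polynomial.C (∑ k : Fin (N+1), c j k * (ratFun A B t₀)^(k:ℕ)) * Polynomial.X^(j:ℕ) with hP1
    set P2 : Polynomial ℝ := ∑ j : Fin (N+1),
      Polynomial.C (∑ k : Fin (N+1), c j k * (-(ratFun A B t₀))^(k:ℕ)) * Polynomial.X^(j:ℕ) with hP2
    have hevP1 : ∀ x : ℝ, P1.eval x = ψ x (ratFun A B t₀) := by
      intro x
      rw [hP1, hψ]
      simp only [Polynomial.eval_finset_sum, Polynomial.eval_mul, Polynomial.eval_C,
        Polynomial.eval_pow, Polynomial.eval_X]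
      apply Finset.sum_congr rfl
      intro j _
      rw [Finset.sum_mul]
      apply Finset.sum_congr rfl
      intro k _
      ring
    have hevP2 : ∀ x : ℝ, P2.eval x = ψ x (-(ratFun A B t₀)) := by
      intro x
      rw [hP2, hψ]
      simp only [Polynomial.eval_finset_sum, Polynomial.eval_mul, Polynomial.eval_C,
        Polynomial.eval_pow, Polynomial.eval_X]
      apply Finset.sum_congr rfl
      intro j _
      rw [Finset.sum_mul]
      apply Finset.sum_congr rfl
      intro k _
      ring
    have hεk : ∀ k : ℕ, ε^k = 1 ∨ ε^k = -1 := by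
      intro k
      rcases hε with h | h
      · left; rw [h, one_pow]
      · rcases Nat.even_or_odd k with hk | hk
        · left; rw [h]; exact hk.neg_one_pow
        · right; rw [h]; exact hk.neg_one_pow
    have hroots : ∀ k : ℕ, (P1 * P2).IsRoot (ratFun C D t₀ - (k:ℝ) * m * Real.pi) := by
      intro k
      rw [Polynomial.IsRoot, Polynomial.eval_mul]
      rcases hεk k with h | h
      · have := hψ0 k
        rw [h, one_mul] at this
        rw [hevP1, this, zero_mul]
      · have := hψ0 k
        rw [h] at this
        rw [hevP2, show -(ratFun A B t₀) = -1 * ratFun A B t₀ by ring, this, mul_zero]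
    -- infinitely many roots
    have hinj : Function.Injective (fun k : ℕ => ratFun C D t₀ - (k:ℝ) * m * Real.pi) := by
      intro k1 k2 h
      simp only [sub_right_inj] at h
      have hmp : (m:ℝ) * Real.pi ≠ 0 :=
        mul_ne_zero (Int.cast_ne_zero.mpr hm) Real.pi_ne_zero
      have : (k1:ℝ) = (k2:ℝ) := by
        have h' : (k1:ℝ) * ((m:ℝ) * Real.pi) = (k2:ℝ) * ((m:ℝ) * Real.pi) := by
          rw [← mul_assoc, ← mul_assoc]; exact h
        exact mul_right_cancel₀ hmp h'
      exact_mod_cast this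
    have hPP : P1 * P2 = 0 := by
      apply Polynomial.eq_zero_of_infinite_isRoot
      exact Set.infinite_of_injective_forall_mem hinj (fun k => hroots k)
    rcases mul_eq_zero.mp hPP with h | h
    · left
      have := coeff_sum_C_X (fun j => ∑ k : Fin (N+1), c j k * (ratFun A B t₀)^(k:ℕ)) j₀
      rw [← hP1, h, Polynomial.coeff_zero] at this
      rw [hpeval]
      exact this.symm
    · right
      have := coeff_sum_C_X (fun j => ∑ k : Fin (N+1), c j k * (-(ratFun A B t₀))^(k:ℕ)) j₀
      rw [← hP2, h, Polynomial.coeff_zero] at this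
      rw [hpeval]
      exact this.symm
  -- now conclude: r takes finitely many values on an infinite set
  set q : Polynomial ℝ := hp * hp.comp (-Polynomial.X) with hq
  have hqcompne : hp.comp (-Polynomial.X) ≠ 0 := by
    intro h0
    apply hpne
    apply Polynomial.funext
    intro y
    have := congrArg (Polynomial.eval (-y)) h0
    simpa [Polynomial.eval_comp] using this
  have hqne : q ≠ 0 := mul_ne_zero hpne hqcompne
  have hqeval : ∀ y : ℝ, q.eval y = hp.eval y * hp.eval (-y) := by
    intro y
    rw [hq]
    simp [Polynomial.eval_comp]
  have hΩinf : ({t : ℝ | B.eval t ≠ 0 ∧ D.eval t ≠ 0}).Infinite := by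
    have hfin : ({t : ℝ | B.eval t ≠ 0 ∧ D.eval t ≠ 0}ᶜ).Finite := by
      apply Set.Finite.subset (Polynomial.finite_setOf_isRoot (mul_ne_zero hB hD))
      intro t ht
      simp only [Set.mem_compl_iff, Set.mem_setOf_eq, not_and_or, not_not] at ht
      simp only [Set.mem_setOf_eq, Polynomial.IsRoot, Polynomial.eval_mul]
      rcases ht with h | h
      · rw [h, zero_mul]
      · rw [h, mul_zero]
    have := hfin.infinite_compl
    rwa [compl_compl] at this
  have hval : ∀ t ∈ ({t : ℝ | B.eval t ≠ 0 ∧ D.eval t ≠ 0}),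
      ratFun A B t ∈ {y : ℝ | q.IsRoot y} := by
    intro t ht
    obtain ⟨hBt, hDt⟩ := ht
    simp only [Set.mem_setOf_eq, Polynomial.IsRoot]
    rw [hqeval]
    rcases key t hBt hDt with h | h
    · rw [h, zero_mul]
    · rw [h, mul_zero]
  obtain ⟨v, hv⟩ := pigeon_fiber hΩinf (Polynomial.finite_setOf_isRoot hqne) hval
  have hroot : A - Polynomial.C v * B = 0 := by
    apply Polynomial.eq_zero_of_infinite_isRoot
    apply hv.mono
    rintro t ⟨⟨hBt, hDt⟩, hrt⟩
    simp only [Set.mem_setOf_eq, Polynomial.IsRoot, Polynomial.eval_sub, Polynomial.eval_mul,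
      Polynomial.eval_C]
    have : A.eval t = v * B.eval t := by
      rw [← hrt]
      unfold ratFun
      field_simp
    rw [this, sub_self]
  have hA : A = Polynomial.C v * B := sub_eq_zero.mp hroot
  obtain ⟨u, w, huw⟩ := hAB
  have hunit : IsUnit B := by
    apply IsUnit.of_mul_eq_one (u * Polynomial.C v + w)
    rw [hA] at huw
    linear_combination huw
  have hBdeg : B.natDegree = 0 := Polynomial.natDegree_eq_zero_of_isUnit hunit
  have hAdeg : A.natDegree = 0 := by
    rw [hA]
    exact Nat.le_zero.mp (le_trans (Polynomial.natDegree_C_mul_le v B) (le_of_eq hBdeg))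
  exact hr ⟨hAdeg, hBdeg⟩

theorem finitely_many_self_intersections_of_theta_bounded
    (A B C D : Polynomial ℝ) (hB : B ≠ 0) (hD : D ≠ 0)
    (hAB : IsCoprime A B) (hCD : IsCoprime C D)
    (hr : ¬ (A.natDegree = 0 ∧ B.natDegree = 0))
    (hθ : ¬ (C.natDegree = 0 ∧ D.natDegree = 0))
    (hproper : IsProperPolar A B C D)
    (hbounded : ∃ M : ℝ, ∀ t ∈ polarDomain B D, |ratFun C D t| ≤ M) :
    (selfIntersections A B C D).Finite := by
  classical
  by_contra hfin
  have hinf : (selfIntersections A B C D).Infinite := hfin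
  obtain ⟨M, hM⟩ := hbounded
  obtain ⟨F, hF, hprop⟩ := hproper
  set P : ℝ → ℝ × ℝ := polarCurve A B C D with hPdef
  set S0 : Set (ℝ × ℝ) :=
    selfIntersections A B C D \ (P '' F ∪ {((0:ℝ),(0:ℝ))}) with hS0def
  have hS0 : S0.Infinite :=
    hinf.diff ((hF.image P).union (Set.finite_singleton _))
  -- each point of S0 yields a pair with an integer angle shift
  have claim : ∀ p ∈ S0, ∃ t s : ℝ, ∃ mm : ℤ,
      t ∈ polarDomain B D ∧ s ∈ polarDomain B D ∧ t ∉ F ∧ s ∉ F ∧ P t = p ∧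
      mm ≠ 0 ∧ |(mm:ℝ)| * Real.pi ≤ 2*M ∧
      ratFun C D t = ratFun C D s + mm * Real.pi ∧
      ((Even mm ∧ ratFun A B t = ratFun A B s) ∨
        (Odd mm ∧ ratFun A B t = -(ratFun A B s))) := by
    rintro p ⟨⟨t, s, hts1, hts2, htsne, hPt, hPs⟩, hpnot⟩
    simp only [Set.mem_union, Set.mem_image, Set.mem_singleton_iff, not_or] at hpnot
    obtain ⟨hpim, hporig⟩ := hpnot
    have htF : t ∉ F := fun h => hpim ⟨t, h, hPt⟩
    have hsF : s ∉ F := fun h => hpim ⟨s, h, hPs⟩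
    have hrt : ratFun A B t ≠ 0 := by
      intro h0
      apply hporig
      rw [← hPt]
      simp [hPdef, polarCurve, h0]
    have hPts : P t = P s := by rw [hPdef, hPt, hPs]
    have h1 : ratFun A B t * Real.cos (ratFun C D t)
        = ratFun A B s * Real.cos (ratFun C D s) := congrArg Prod.fst hPts
    have h2 : ratFun A B t * Real.sin (ratFun C D t)
        = ratFun A B s * Real.sin (ratFun C D s) := congrArg Prod.snd hPts
    obtain ⟨mm, hmm, hpar⟩ := angle_rel hrt h1 h2
    have hmm0 : mm ≠ 0 := by
      intro h0
      subst h0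
      rcases hpar with ⟨_, hreq⟩ | ⟨hodd, _⟩
      · have hteq : ratFun C D t = ratFun C D s := by
          have := hmm; push_cast at this; linarith
        exact htsne (hprop t s hts1 hts2 htF hsF hreq hteq)
      · simpa using hodd
    refine ⟨t, s, mm, hts1, hts2, htF, hsF, hPt, hmm0, ?_, by linarith [hmm], hpar⟩
    calc |(mm:ℝ)| * Real.pi = |(mm:ℝ) * Real.pi| := by
          rw [abs_mul, abs_of_nonneg Real.pi_nonneg]
      _ = |ratFun C D t - ratFun C D s| := by rw [← hmm]
      _ ≤ |ratFun C D t| + |ratFun C D s| := by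
          rw [sub_eq_add_neg]
          exact le_trans (abs_add_le _ _) (by rw [abs_neg])
      _ ≤ M + M := add_le_add (hM t hts1) (hM s hts2)
      _ = 2*M := by ring
  choose! tf sf mf hmem1 hmem2 htF hsF hPt hm0 hbd hθrel hpar using claim
  -- pigeonhole on the shift
  set L : ℤ := ⌈2*M/Real.pi⌉ with hL
  have hmemIcc : ∀ p ∈ S0, mf p ∈ Set.Icc (-L) L := by
    intro p hp
    have hb := hbd p hp
    have hπ := Real.pi_pos
    have h1 : |(mf p : ℝ)| ≤ 2*M/Real.pi := by
      rw [le_div_iff₀ hπ]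
      exact hb
    have h2 : |((mf p : ℤ) : ℝ)| ≤ (L : ℝ) := le_trans h1 (Int.le_ceil _)
    have h3 : |mf p| ≤ L := by exact_mod_cast h2
    exact abs_le.mp h3
  obtain ⟨mv, hmv⟩ := pigeon_fiber hS0 (Set.finite_Icc (-L) L) hmemIcc
  set Sm : Set (ℝ × ℝ) := {p ∈ S0 | mf p = mv} with hSm
  have hmv0 : mv ≠ 0 := by
    obtain ⟨p, hp, hpm⟩ := hmv.nonempty
    rw [← hpm]
    exact hm0 p hp
  set ε : ℝ := if Even mv then 1 else -1 with hεdef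
  have hε : ε = 1 ∨ ε = -1 := by
    rw [hεdef]
    split <;> simp
  set Tset : Set ℝ := tf '' Sm with hTset
  have hinjOn : Set.InjOn tf Sm := by
    intro p1 hp1 p2 hp2 heq
    have e1 : P (tf p1) = p1 := hPt p1 hp1.1
    have e2 : P (tf p2) = p2 := hPt p2 hp2.1
    rw [← e1, ← e2, heq]
  have hTinf : Tset.Infinite := hmv.image hinjOn
  have hTsub : ∀ t ∈ Tset, B.eval t ≠ 0 ∧ D.eval t ≠ 0 := by
    rintro t ⟨p, hp, rfl⟩
    exact hmem1 p hp.1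
  have hσex : ∀ t ∈ Tset, ∃ s : ℝ, (B.eval s ≠ 0 ∧ D.eval s ≠ 0) ∧
      ratFun C D t = ratFun C D s + mv * Real.pi ∧
      ratFun A B t = ε * ratFun A B s := by
    rintro t ⟨p, hp, rfl⟩
    obtain ⟨hp0, hpm⟩ := hp
    refine ⟨sf p, hmem2 p hp0, ?_, ?_⟩
    · rw [← hpm]
      exact hθrel p hp0
    · rcases hpar p hp0 with ⟨heven, hre⟩ | ⟨hodd, hre⟩
      · have : ε = 1 := by rw [hεdef, if_pos (hpm ▸ heven)]
        rw [this, one_mul]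
        exact hre
      · have : ε = -1 := by
          rw [hεdef, if_neg]
          rw [← hpm]
          exact Int.not_even_iff_odd.symm.mp hodd
        rw [this]
        rw [hre]
        ring
  choose! σ hσ using hσex
  exact core_contradiction A B C D hB hD hAB hr mv hmv0 ε hε Tset hTinf hTsub σ hσ
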